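/- arXiv:0909.4884 — 2 statements merged into one kernel-verified Lean document; each statement's English description precedes it below -/
import Mathlib

section
/- If a noncommutative polynomial p is harmonic (Lap[p,h]=0), then Lap[p^T·p, h] = 2·∑_{i=1}^{g} (D[p, x_i, h])^T · D[p, x_i, h]. In particular, the square p^T·p of a harmonic polynomial is subharmonic (its Laplacian is a sum of terms of the form q^T·q, hence matrix positive). -/
noncomputable section

/-- Variables: `some i` is `xᵢ`, `none` is the direction variable `h`. -/
abbrev Var (g : ℕ) := Option (Fin g)

/-- Noncommutative polynomials `ℝ⟨x₁,…,x_g,h⟩`. -/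
abbrev NC (g : ℕ) := MonoidAlgebra ℝ (FreeMonoid (Var g))

/-- The monomial corresponding to a word. -/
def mono (g : ℕ) (w : List (Var g)) : NC g :=
  MonoidAlgebra.of ℝ (FreeMonoid (Var g)) (FreeMonoid.ofList w)

/-- The generator `xᵢ`. -/
def Xv (g : ℕ) (i : Fin g) : NC g := mono g [some i]

/-- The direction variable `h`. -/
def Hv (g : ℕ) : NC g := mono g [none]

/-- Directional derivative of a word in `xᵢ` in direction `h`: sum of the
terms obtained by replacing one occurrence of `xᵢ` by `h`. -/
def wordD (g : ℕ) (i : Fin g) : List (Var g) → NC g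
  | [] => 0
  | a :: w =>
      (if a = some i then mono g (none :: w) else 0) + mono g [a] * wordD g i w

/-- Directional derivative `D[p, xᵢ, h]`, extended linearly from words. -/
def D (g : ℕ) (i : Fin g) (p : NC g) : NC g :=
  Finsupp.sum p.coeff fun w c => c • wordD g i (FreeMonoid.toList w)

/-- The noncommutative Laplacian `Lap[p,h] := ∑ᵢ D[D[p,xᵢ,h],xᵢ,h]`. -/
def Lap (g : ℕ) (p : NC g) : NC g := ∑ i : Fin g, D g i (D g i p)

/-- The transpose: linear anti-automorphism reversing words and fixing generators. -/
def transp (g : ℕ) (p : NC g) : NC g :=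
  MonoidAlgebra.ofCoeff
    (Finsupp.mapDomain (fun w => FreeMonoid.ofList (FreeMonoid.toList w).reverse) p.coeff)

/-- Evaluation of a polynomial at a tuple of matrices (one for each variable). -/
def eval (g n : ℕ) (M : Var g → Matrix (Fin n) (Fin n) ℝ) (p : NC g) :
    Matrix (Fin n) (Fin n) ℝ :=
  Finsupp.sum p.coeff fun w c => c • ((FreeMonoid.toList w).map M).prod

/-- `p` is a polynomial in `x₁,…,x_g` only (the variable `h` does not occur). -/
def NoH (g : ℕ) (p : NC g) : Prop :=
  ∀ w ∈ p.coeff.support, none ∉ FreeMonoid.toList w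

/-- `p` is a homogeneous polynomial of degree `d` in the variables `x₁,…,x_g`. -/
def HomogX (g : ℕ) (d : ℕ) (p : NC g) : Prop :=
  ∀ w ∈ p.coeff.support, none ∉ FreeMonoid.toList w ∧ (FreeMonoid.toList w).length = d


-- auxiliary lemmas
lemma mono_eq_single (g : ℕ) (w : List (Var g)) :
    mono g w = MonoidAlgebra.single (FreeMonoid.ofList w) (1 : ℝ) := rfl

lemma mono_append (g : ℕ) (u v : List (Var g)) :
    mono g (u ++ v) = mono g u * mono g v := by
  rw [mono_eq_single, mono_eq_single, mono_eq_single, MonoidAlgebra.single_mul_single, mul_one]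
  rfl

lemma D_eq_lc (g : ℕ) (i : Fin g) (p : NC g) :
    D g i p = Finsupp.linearCombination ℝ (fun w => wordD g i (FreeMonoid.toList w)) p.coeff := by
  rw [Finsupp.linearCombination_apply]; rfl

lemma D_add (g : ℕ) (i : Fin g) (p q : NC g) : D g i (p + q) = D g i p + D g i q := by
  simp [D_eq_lc]

lemma D_smul (g : ℕ) (i : Fin g) (c : ℝ) (p : NC g) : D g i (c • p) = c • D g i p := by
  simp [D_eq_lc]

lemma D_single (g : ℕ) (i : Fin g) (w : FreeMonoid (Var g)) (c : ℝ) :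
    D g i (MonoidAlgebra.single w c) = c • wordD g i (FreeMonoid.toList w) := by
  rw [D]; exact Finsupp.sum_single_index (by simp)

lemma wordD_append (g : ℕ) (i : Fin g) (u v : List (Var g)) :
    wordD g i (u ++ v) = wordD g i u * mono g v + mono g u * wordD g i v := by
  induction u with
  | nil =>
      simp [wordD]
      rw [show mono g ([] : List (Var g)) = 1 from rfl, one_mul]
  | cons a u ih =>
      show wordD g i (a :: (u ++ v)) = _
      rw [wordD, wordD, ih]
      rw [show (none :: (u ++ v)) = (none :: u) ++ v from rfl, mono_append,
        show (a :: u : List (Var g)) = [a] ++ u from rfl, mono_append]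
      by_cases h : a = some i <;> simp [h, mul_add, add_mul, mul_assoc, add_assoc]

lemma toList_mul (g : ℕ) (u v : FreeMonoid (Var g)) :
    FreeMonoid.toList (u * v) = FreeMonoid.toList u ++ FreeMonoid.toList v := rfl

lemma D_mul (g : ℕ) (i : Fin g) (p q : NC g) :
    D g i (p * q) = D g i p * q + p * D g i q := by
  induction p using MonoidAlgebra.induction_linear with
  | zero => simp [D_eq_lc]
  | add f f' hf hf' =>
      rw [add_mul, D_add, hf, hf', D_add]; noncomm_ring
  | single w c =>
      induction q using MonoidAlgebra.induction_linear with
      | zero => simp [D_eq_lc]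
      | add f f' hf hf' => rw [mul_add, D_add, hf, hf', D_add]; noncomm_ring
      | single v d =>
          rw [MonoidAlgebra.single_mul_single, D_single, D_single, D_single,
            toList_mul, wordD_append]
          have hw : (MonoidAlgebra.single w c : NC g) = c • mono g (FreeMonoid.toList w) := by
            rw [mono_eq_single]; simp [MonoidAlgebra.smul_single]
          have hv : (MonoidAlgebra.single v d : NC g) = d • mono g (FreeMonoid.toList v) := by
            rw [mono_eq_single]; simp [MonoidAlgebra.smul_single]
          rw [hw, hv]
          simp only [smul_add, smul_mul_assoc, mul_smul_comm, smul_smul]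
          rw [mul_comm d c]

-- transpose
lemma transp_add (g : ℕ) (p q : NC g) : transp g (p + q) = transp g p + transp g q :=
  congrArg MonoidAlgebra.ofCoeff Finsupp.mapDomain_add

lemma transp_smul (g : ℕ) (c : ℝ) (p : NC g) : transp g (c • p) = c • transp g p :=
  congrArg MonoidAlgebra.ofCoeff (Finsupp.mapDomain_smul _ _)

lemma transp_single (g : ℕ) (w : FreeMonoid (Var g)) (c : ℝ) :
    transp g (MonoidAlgebra.single w c)
      = MonoidAlgebra.single (FreeMonoid.ofList (FreeMonoid.toList w).reverse) c :=
  congrArg MonoidAlgebra.ofCoeff Finsupp.mapDomain_single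

lemma transp_mono (g : ℕ) (w : List (Var g)) :
    transp g (mono g w) = mono g w.reverse := by
  rw [mono_eq_single, transp_single, FreeMonoid.toList_ofList]; rfl

lemma transp_zero (g : ℕ) : transp g 0 = 0 := congrArg MonoidAlgebra.ofCoeff Finsupp.mapDomain_zero

lemma transp_mul (g : ℕ) (p q : NC g) : transp g (p * q) = transp g q * transp g p := by
  induction p using MonoidAlgebra.induction_linear with
  | zero => simp [transp_zero]
  | add f f' hf hf' => rw [add_mul, transp_add, hf, hf', transp_add, mul_add]
  | single w c =>
      induction q using MonoidAlgebra.induction_linear with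
      | zero => simp [transp_zero]
      | add f f' hf hf' => rw [mul_add, transp_add, hf, hf', transp_add, add_mul]
      | single v d =>
          rw [MonoidAlgebra.single_mul_single, transp_single, transp_single, transp_single,
            MonoidAlgebra.single_mul_single, toList_mul, List.reverse_append]
          rw [mul_comm d c]
          congr 1

lemma transp_wordD (g : ℕ) (i : Fin g) (w : List (Var g)) :
    transp g (wordD g i w) = wordD g i w.reverse := by
  induction w with
  | nil => simp [wordD, transp_zero]
  | cons a w ih =>
      have h2 : (a :: w).reverse = w.reverse ++ [a] := by simp
      rw [wordD, transp_add, transp_mul, ih, transp_mono, h2, wordD_append]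
      by_cases h : a = some i <;>
        simp [h, wordD, mono_append, transp_zero, transp_mono, add_comm]

lemma transp_D (g : ℕ) (i : Fin g) (p : NC g) :
    transp g (D g i p) = D g i (transp g p) := by
  induction p using MonoidAlgebra.induction_linear with
  | zero => simp [D_eq_lc, transp_zero]
  | add f f' hf hf' => rw [D_add, transp_add, hf, hf', transp_add, D_add]
  | single w c =>
      rw [D_single, transp_smul, transp_single, D_single, FreeMonoid.toList_ofList,
        transp_wordD]

lemma transp_sum (g : ℕ) (s : Finset (Fin g)) (f : Fin g → NC g) :
    transp g (∑ i ∈ s, f i) = ∑ i ∈ s, transp g (f i) := by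
  classical
  induction s using Finset.induction with
  | empty => simp [transp_zero]
  | insert a s h ih => simp [Finset.sum_insert h, transp_add, ih]


/-- the Laplacian of the square of a harmonic polynomial is a
sum of squares `2 ∑ᵢ (D[p,xᵢ,h])ᵀ D[p,xᵢ,h]`. -/
theorem lap_square_of_harmonic (g : ℕ) (p : NC g) (hp : Lap g p = 0) :
    Lap g (transp g p * p) = 2 • ∑ i : Fin g, transp g (D g i p) * D g i p := by
  have key : ∀ i : Fin g, D g i (D g i (transp g p * p))
      = D g i (D g i (transp g p)) * p + 2 • (transp g (D g i p) * D g i p)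
        + transp g p * D g i (D g i p) := by
    intro i
    rw [D_mul, D_add, D_mul, D_mul, transp_D, two_smul]
    abel
  rw [Lap]
  simp only [key]
  rw [Finset.sum_add_distrib, Finset.sum_add_distrib, ← Finset.sum_mul, ← Finset.mul_sum]
  have h1 : ∑ i : Fin g, D g i (D g i (transp g p)) = 0 := by
    have : ∑ i : Fin g, D g i (D g i (transp g p)) = transp g (Lap g p) := by
      rw [Lap, transp_sum]
      exact Finset.sum_congr rfl fun i _ => by rw [transp_D, transp_D]
    rw [this, hp, transp_zero]
  have h2 : ∑ i : Fin g, D g i (D g i p) = 0 := hp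
  rw [h1, h2, zero_mul, mul_zero, zero_add, add_zero, ← Finset.smul_sum]
end
end

section
/- Let γ = x_1 + i·x_2 in the complexified free algebra on two symmetric variables x_1, x_2. Then for every d ≥ 1: D[Re(γ^d), x_1, h] = D[Im(γ^d), x_2, h] and D[Re(γ^d), x_2, h] = -D[Im(γ^d), x_1, h]. -/
noncomputable section

/-- Complex noncommutative polynomials `ℂ⟨x₁,x₂,h⟩`. -/
abbrev NCC := MonoidAlgebra ℂ (FreeMonoid (Var 2))

def XC (i : Fin 2) : NCC := MonoidAlgebra.of ℂ (FreeMonoid (Var 2)) (FreeMonoid.ofList [some i])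

/-- `γ = x₁ + i x₂`. -/
def gam : NCC := XC 0 + Complex.I • XC 1

/-- Coefficientwise real part. -/
def rePart (p : NCC) : NC 2 := MonoidAlgebra.ofCoeff (Finsupp.mapRange Complex.re Complex.zero_re p.coeff)

/-- Coefficientwise imaginary part. -/
def imPart (p : NCC) : NC 2 := MonoidAlgebra.ofCoeff (Finsupp.mapRange Complex.im Complex.zero_im p.coeff)

/-- Complex-linear transpose, reversing monomials. -/
def transpC (p : NCC) : NCC :=
  MonoidAlgebra.ofCoeff (Finsupp.mapDomain (fun w => FreeMonoid.ofList (FreeMonoid.toList w).reverse) p.coeff)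

/-! ### Auxiliary machinery for the proof -/

/-- Shorthand for a complex monomial. -/
def sg (w : List (Var 2)) (c : ℂ) : NCC := MonoidAlgebra.single (FreeMonoid.ofList w) c

/-- Complex word derivative. -/
def wordDC (i : Fin 2) : List (Var 2) → NCC
  | [] => 0
  | a :: w => (if a = some i then sg (none :: w) 1 else 0) + sg [a] 1 * wordDC i w

/-- Complex directional derivative. -/
def DC (i : Fin 2) (p : NCC) : NCC :=
  Finsupp.sum p.coeff fun w c => c • wordDC i (FreeMonoid.toList w)

lemma DC_add (i : Fin 2) (p q : NCC) : DC i (p + q) = DC i p + DC i q :=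
  Finsupp.sum_add_index' (fun _ => zero_smul _ _) (fun _ b₁ b₂ => add_smul b₁ b₂ _)

lemma DC_zero (i : Fin 2) : DC i (0 : NCC) = 0 :=
  Finsupp.sum_zero_index

lemma DC_single (i : Fin 2) (w : FreeMonoid (Var 2)) (c : ℂ) :
    DC i (MonoidAlgebra.single w c) = c • wordDC i (FreeMonoid.toList w) :=
  Finsupp.sum_single_index (zero_smul _ _)

lemma sg_smul (w : List (Var 2)) (c : ℂ) : sg w c = c • sg w 1 := by
  rw [sg, sg, MonoidAlgebra.smul_single', mul_one]

lemma mapRange_single_mul (f : ℂ → ℝ) (h0 : f 0 = 0)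
    (hadd : ∀ a b, f (a + b) = f a + f b) (x : FreeMonoid (Var 2)) (q : NCC) :
    (MonoidAlgebra.ofCoeff (Finsupp.mapRange f h0 (MonoidAlgebra.single x 1 * q).coeff) : NC 2)
      = MonoidAlgebra.single x (1 : ℝ) * (id (MonoidAlgebra.ofCoeff (Finsupp.mapRange f h0 q.coeff)) : NC 2) := by
  simp only [id_eq]
  induction q using MonoidAlgebra.induction with
  | zero => simp
  | single_add y b q _ _ ih =>
      rw [mul_add, MonoidAlgebra.coeff_add, Finsupp.mapRange_add hadd, MonoidAlgebra.coeff_add,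
        Finsupp.mapRange_add hadd, MonoidAlgebra.ofCoeff_add, MonoidAlgebra.ofCoeff_add, mul_add, ih,
        MonoidAlgebra.single_mul_single, MonoidAlgebra.coeff_single, MonoidAlgebra.coeff_single,
        Finsupp.mapRange_single, Finsupp.mapRange_single, MonoidAlgebra.ofCoeff_single,
        MonoidAlgebra.ofCoeff_single, MonoidAlgebra.single_mul_single, one_mul, one_mul]

lemma mapRange_smul_wordDC (f : ℂ → ℝ) (h0 : f 0 = 0)
    (hadd : ∀ a b, f (a + b) = f a + f b) (i : Fin 2) (c : ℂ) :
    ∀ w, (MonoidAlgebra.ofCoeff (Finsupp.mapRange f h0 (c • wordDC i w).coeff) : NC 2) = f c • wordD 2 i w := by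
  intro w
  induction w with
  | nil =>
      show (MonoidAlgebra.ofCoeff (Finsupp.mapRange f h0 (c • (0 : NCC)).coeff) : NC 2) = f c • (0 : NC 2)
      simp
  | cons a w ih =>
      rw [wordDC, wordD, smul_add, MonoidAlgebra.coeff_add, Finsupp.mapRange_add hadd, MonoidAlgebra.ofCoeff_add, smul_add]
      congr 1
      · by_cases h : a = some i
        · simp only [h, if_pos]
          rw [sg, MonoidAlgebra.smul_single', mul_one, MonoidAlgebra.coeff_single, Finsupp.mapRange_single, mono,
              MonoidAlgebra.of_apply, MonoidAlgebra.smul_single', mul_one, MonoidAlgebra.ofCoeff_single]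
        · simp only [h, if_neg, if_false]
          simp
      · rw [← mul_smul_comm, sg, mapRange_single_mul f h0 hadd, ih, mono,
          MonoidAlgebra.of_apply, ← mul_smul_comm]
        rfl

def rePartHom : NCC →+ NC 2 := MonoidAlgebra.coeffAddEquiv.symm.toAddMonoidHom.comp ((Finsupp.mapRange.addMonoidHom Complex.reAddGroupHom).comp MonoidAlgebra.coeffAddEquiv.toAddMonoidHom)
def imPartHom : NCC →+ NC 2 := MonoidAlgebra.coeffAddEquiv.symm.toAddMonoidHom.comp ((Finsupp.mapRange.addMonoidHom Complex.imAddGroupHom).comp MonoidAlgebra.coeffAddEquiv.toAddMonoidHom)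

lemma rePartHom_eq (p : NCC) : rePartHom p = rePart p := rfl
lemma imPartHom_eq (p : NCC) : imPartHom p = imPart p := rfl

lemma D_rePart (i : Fin 2) (p : NCC) : D 2 i (rePart p) = rePart (DC i p) := by
  conv_rhs => rw [← rePartHom_eq, DC, map_finsuppSum]
  rw [D, rePart, MonoidAlgebra.coeff_ofCoeff,
    Finsupp.sum_mapRange_index (fun w => zero_smul ℝ (wordD 2 i (FreeMonoid.toList w)))]
  refine Finsupp.sum_congr fun w _ => ?_
  rw [rePartHom_eq]
  exact (mapRange_smul_wordDC Complex.re Complex.zero_re (fun a b => Complex.add_re a b) i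
    (p.coeff w) (FreeMonoid.toList w)).symm

lemma D_imPart (i : Fin 2) (p : NCC) : D 2 i (imPart p) = imPart (DC i p) := by
  conv_rhs => rw [← imPartHom_eq, DC, map_finsuppSum]
  rw [D, imPart, MonoidAlgebra.coeff_ofCoeff,
    Finsupp.sum_mapRange_index (fun w => zero_smul ℝ (wordD 2 i (FreeMonoid.toList w)))]
  refine Finsupp.sum_congr fun w _ => ?_
  rw [imPartHom_eq]
  exact (mapRange_smul_wordDC Complex.im Complex.zero_im (fun a b => Complex.add_im a b) i
    (p.coeff w) (FreeMonoid.toList w)).symm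

lemma rePart_I_smul (q : NCC) : rePart (Complex.I • q) = - imPart q := by
  ext w
  show ((Complex.I • q).coeff w).re = -((q.coeff w).im)
  rw [MonoidAlgebra.coeff_smul, Finsupp.smul_apply, smul_eq_mul]
  simp [Complex.mul_re]

lemma imPart_I_smul (q : NCC) : imPart (Complex.I • q) = rePart q := by
  ext w
  show ((Complex.I • q).coeff w).im = (q.coeff w).re
  rw [MonoidAlgebra.coeff_smul, Finsupp.smul_apply, smul_eq_mul]
  simp [Complex.mul_im]

lemma DC_single_mul_single (i : Fin 2) (a : Var 2) (c : ℂ) (y : FreeMonoid (Var 2)) (b : ℂ) :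
    DC i (sg [a] c * MonoidAlgebra.single y b)
      = (if a = some i then c • (sg [none] 1 * MonoidAlgebra.single y b) else 0)
        + sg [a] c * DC i (MonoidAlgebra.single y b) := by
  rw [sg, MonoidAlgebra.single_mul_single, DC_single, DC_single]
  have hlist : FreeMonoid.toList (FreeMonoid.ofList [a] * y) = a :: FreeMonoid.toList y := rfl
  rw [hlist, wordDC, smul_add]
  congr 1
  · by_cases h : a = some i
    · simp only [h, if_pos]
      have hidx : FreeMonoid.ofList (none :: FreeMonoid.toList y)
          = FreeMonoid.ofList [none] * y := rfl
      rw [sg, sg, MonoidAlgebra.single_mul_single, one_mul, hidx,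
        MonoidAlgebra.smul_single', MonoidAlgebra.smul_single', mul_one]
    · simp [h]
  · conv_rhs => rw [mul_smul_comm]
    rw [show MonoidAlgebra.single (FreeMonoid.ofList [a]) c = c • sg [a] 1 from sg_smul [a] c,
      smul_mul_assoc, smul_smul, mul_comm b c]

lemma DC_single_mul (i : Fin 2) (a : Var 2) (c : ℂ) (q : NCC) :
    DC i (sg [a] c * q)
      = (if a = some i then c • (sg [none] 1 * q) else 0) + sg [a] c * DC i q := by
  induction q using MonoidAlgebra.induction with
  | zero => simp [DC_zero]
  | single_add y b q _ _ ih =>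
      rw [mul_add, DC_add, ih, DC_single_mul_single, DC_add, mul_add]
      by_cases h : a = some i <;> simp only [h, if_pos, if_neg, if_false, mul_add, smul_add,
        not_false_iff] <;> abel

lemma gam_eq : gam = sg [some 0] 1 + sg [some 1] Complex.I := by
  rw [gam, XC, XC, MonoidAlgebra.of_apply, MonoidAlgebra.of_apply, sg, sg,
    MonoidAlgebra.smul_single', mul_one]

def HC : NCC := sg [none] 1

lemma DC0_gam_mul (q : NCC) : DC 0 (gam * q) = HC * q + gam * DC 0 q := by
  rw [gam_eq, add_mul, DC_add, DC_single_mul, DC_single_mul, add_mul]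
  norm_num [HC]
  abel

lemma DC1_gam_mul (q : NCC) : DC 1 (gam * q) = Complex.I • (HC * q) + gam * DC 1 q := by
  rw [gam_eq, add_mul, DC_add, DC_single_mul, DC_single_mul, add_mul]
  norm_num [HC]
  abel

lemma DC_one (i : Fin 2) : DC i (1 : NCC) = 0 := by
  rw [show (1 : NCC) = MonoidAlgebra.single 1 1 from MonoidAlgebra.one_def, DC_single]
  show (1 : ℂ) • wordDC i [] = 0
  simp [wordDC]

lemma DC_gam_pow (d : ℕ) : DC 1 (gam ^ d) = Complex.I • DC 0 (gam ^ d) := by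
  induction d with
  | zero => simp [DC_one]
  | succ d ih =>
      rw [pow_succ', DC1_gam_mul, DC0_gam_mul, ih, smul_add, mul_smul_comm]

/-- Cauchy–Riemann type identities for derivatives of `γ^d`. -/
theorem dird_gamma_pow (d : ℕ) (hd : 1 ≤ d) :
    D 2 0 (rePart (gam ^ d)) = D 2 1 (imPart (gam ^ d)) ∧
    D 2 1 (rePart (gam ^ d)) = - D 2 0 (imPart (gam ^ d)) := by
  constructor
  · rw [D_rePart, D_imPart, DC_gam_pow, imPart_I_smul]
  · rw [D_rePart, D_imPart, DC_gam_pow, rePart_I_smul]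
end
end
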